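/- arXiv:0707.4559 — 2 statements merged into one kernel-verified Lean document; each statement's English description precedes it below -/
import Mathlib

section
/- Entropic uncertainty relation for POVMs: For any two POVMs A = {A_a} and B = {B_b} on a finite-dimensional Hilbert space and any density operator ρ, H(A|ρ) + H(B|ρ) ≥ -2 log max_{a,b} ‖A_a^{1/2} B_b^{1/2}‖, where H(A|ρ) = -Σ_a tr(ρ A_a) log tr(ρ A_a) is the Shannon entropy of the outcome distribution. -/
open Matrix
open scoped ComplexOrder

/-- Operator norm of a matrix, acting on the Euclidean space. -/
noncomputable def opNorm {n : Type*} [Fintype n] [DecidableEq n]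
    (M : Matrix n n ℂ) : ℝ :=
  ‖Matrix.toEuclideanCLM (𝕜 := ℂ) M‖

/-- Shannon entropy of the outcome distribution of a POVM `A` in a state `ρ`,
`H(A|ρ) = -∑ a, tr(ρ A_a) log tr(ρ A_a)` (natural logarithm as the fixed base). -/
noncomputable def povmEntropy {n ι : Type*} [Fintype n] [Fintype ι]
    (ρ : Matrix n n ℂ) (A : ι → Matrix n n ℂ) : ℝ :=
  -∑ a, (ρ * A a).trace.re * Real.log (ρ * A a).trace.re

open Filter Topology Set

namespace EUR

set_option linter.unusedSectionVars false

variable {n : Type*} [Fintype n] [DecidableEq n]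

/-- Embedding of matrices into Euclidean space (Frobenius / Hilbert–Schmidt). -/
noncomputable def eMat (X : Matrix n n ℂ) : EuclideanSpace ℂ (n × n) :=
  (WithLp.equiv 2 ((n × n) → ℂ)).symm (fun p => X p.1 p.2)

lemma inner_eMat (X Y : Matrix n n ℂ) :
    (inner ℂ (eMat X) (eMat Y) : ℂ) = (Xᴴ * Y).trace := by
  simp only [eMat, PiLp.inner_apply, WithLp.equiv_symm_apply, PiLp.toLp_apply, RCLike.inner_apply,
    Matrix.trace, Matrix.diag_apply, Matrix.mul_apply, Matrix.conjTranspose_apply]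
  rw [Fintype.sum_prod_type]
  rw [Finset.sum_comm]
  simp [RCLike.star_def]
  exact Finset.sum_congr rfl fun _ _ => Finset.sum_congr rfl fun _ _ => mul_comm _ _

lemma trace_eMat_sq (X : Matrix n n ℂ) :
    (Xᴴ * X).trace = ((‖eMat X‖ : ℝ) : ℂ) ^ 2 := by
  rw [← inner_eMat, inner_self_eq_norm_sq_to_K]
  norm_cast

lemma eMat_eq_zero {X : Matrix n n ℂ} (h : ‖eMat X‖ = 0) : X = 0 := by
  have h0 : eMat X = 0 := norm_eq_zero.mp h
  ext i j
  have := congrFun (congrArg (WithLp.equiv 2 ((n × n) → ℂ)) h0) (i, j)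
  simpa [eMat] using this

lemma abs_trace_le (X Y : Matrix n n ℂ) :
    ‖(Xᴴ * Y).trace‖ ≤ ‖eMat X‖ * ‖eMat Y‖ := by
  rw [← inner_eMat]
  exact norm_inner_le_norm _ _

lemma norm_eMat_mul_le (M X : Matrix n n ℂ) :
    ‖eMat (M * X)‖ ≤ opNorm M * ‖eMat X‖ := by
  have hsq : ∀ Z : Matrix n n ℂ,
      ‖eMat Z‖ ^ 2 = ∑ j, ‖(WithLp.equiv 2 (n → ℂ)).symm (fun i => Z i j)‖ ^ 2 := by
    intro Z
    rw [EuclideanSpace.norm_eq, Real.sq_sqrt (by positivity)]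
    rw [Fintype.sum_prod_type]
    rw [Finset.sum_comm]
    congr 1; ext j
    rw [EuclideanSpace.norm_eq, Real.sq_sqrt (by positivity)]
    simp [eMat]
  have key : ‖eMat (M * X)‖ ^ 2 ≤ (opNorm M * ‖eMat X‖) ^ 2 := by
    rw [hsq, mul_pow, hsq]
    rw [Finset.mul_sum]
    apply Finset.sum_le_sum
    intro j _
    have hcol : (WithLp.equiv 2 (n → ℂ)).symm (fun i => (M * X) i j) =
        Matrix.toEuclideanCLM (𝕜 := ℂ) M ((WithLp.equiv 2 (n → ℂ)).symm (fun i => X i j)) := by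
      rw [Matrix.toEuclideanCLM_toLp]
      congr 1

    rw [hcol]
    have := (Matrix.toEuclideanCLM (𝕜 := ℂ) M).le_opNorm
      ((WithLp.equiv 2 (n → ℂ)).symm (fun i => X i j))
    calc ‖Matrix.toEuclideanCLM (𝕜 := ℂ) M ((WithLp.equiv 2 (n → ℂ)).symm (fun i => X i j))‖ ^ 2
        ≤ (opNorm M * ‖(WithLp.equiv 2 (n → ℂ)).symm (fun i => X i j)‖) ^ 2 := by
          apply pow_le_pow_left₀ (norm_nonneg _) this
      _ = opNorm M ^ 2 * ‖(WithLp.equiv 2 (n → ℂ)).symm (fun i => X i j)‖ ^ 2 := by ring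
  have h1 : (0:ℝ) ≤ ‖eMat (M * X)‖ := norm_nonneg _
  have h2 : (0:ℝ) ≤ opNorm M * ‖eMat X‖ := by
    apply mul_nonneg (norm_nonneg _) (norm_nonneg _)
  nlinarith

lemma trace_sum_smul_mul {ι κ : Type*} [Fintype ι] [Fintype κ]
    (sA : Finset ι) (sB : Finset κ) (f : ι → ℂ) (g : κ → ℂ)
    (P : ι → Matrix n n ℂ) (Q : κ → Matrix n n ℂ) :
    ((∑ a ∈ sA, f a • P a) * (∑ b ∈ sB, g b • Q b)).trace
      = ∑ a ∈ sA, ∑ b ∈ sB, (f a * g b) * (P a * Q b).trace := by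
  rw [Matrix.sum_mul, Matrix.trace_sum]
  apply Finset.sum_congr rfl
  intro a _
  rw [Matrix.mul_sum, Matrix.trace_sum]
  apply Finset.sum_congr rfl
  intro b _
  rw [smul_mul_assoc, mul_smul_comm, smul_smul, Matrix.trace_smul]
  simp [smul_eq_mul]

lemma sum_trace_sandwich {ι : Type*} [Fintype ι]
    (G : ι → Matrix n n ℂ) (hsum : ∑ a, G a = 1) (Z W : Matrix n n ℂ) :
    ∑ a, (Zᴴ * (G a * W)).trace = (Zᴴ * W).trace := by
  have : ∑ a, Zᴴ * (G a * W) = Zᴴ * W := by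
    have : ∑ a, Zᴴ * (G a * W) = Zᴴ * ((∑ a, G a) * W) := by
      rw [Matrix.sum_mul, Matrix.mul_sum]
    rw [this, hsum, one_mul]
  rw [← Matrix.trace_sum, this]

lemma norm_combo {ι : Type*} [Fintype ι]
    (G S : ι → Matrix n n ℂ) (R : Matrix n n ℂ)
    (hSH : ∀ a, (S a)ᴴ = S a) (hSS : ∀ a, S a * S a = G a)
    (hsum : ∑ a, G a = 1) (hRH : Rᴴ = R) (hRtr : (R * R).trace = 1)
    (lam : ι → ℂ) (hlam : ∀ a, ‖lam a‖ ≤ 1) (s : Finset ι) :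
    ‖eMat (∑ a ∈ s, lam a • (G a * R))‖ ≤ 1 := by
  set W : Matrix n n ℂ := ∑ a ∈ s, lam a • (G a * R) with hW
  set N : ℝ := ‖eMat W‖ with hN
  -- sandwich identity : Zᴴ * (G a * W') = (S a * Z)ᴴ * (S a * W')
  have sand : ∀ (a : ι) (Z W' : Matrix n n ℂ),
      Zᴴ * (G a * W') = (S a * Z)ᴴ * (S a * W') := by
    intro a Z W'
    rw [Matrix.conjTranspose_mul, hSH, ← hSS a]
    rw [Matrix.mul_assoc, ← Matrix.mul_assoc (S a), Matrix.mul_assoc]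
    exact (Matrix.mul_assoc _ _ _).symm
  -- squared norms of S a * Z sum to the norm of Z
  have sumnorm : ∀ Z : Matrix n n ℂ,
      ∑ a, ‖eMat (S a * Z)‖ ^ 2 = ‖eMat Z‖ ^ 2 := by
    intro Z
    have : ∀ a : ι, ((‖eMat (S a * Z)‖ : ℝ) : ℂ) ^ 2 = (Zᴴ * (G a * Z)).trace := by
      intro a
      rw [sand a Z Z, ← trace_eMat_sq]
    have h2 : ((∑ a, ‖eMat (S a * Z)‖ ^ 2 : ℝ) : ℂ) = ((‖eMat Z‖ ^ 2 : ℝ) : ℂ) := by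
      push_cast
      calc (∑ a, ((‖eMat (S a * Z)‖ : ℂ)) ^ 2)
          = ∑ a, (Zᴴ * (G a * Z)).trace := Finset.sum_congr rfl (fun a _ => this a)
        _ = (Zᴴ * Z).trace := sum_trace_sandwich G hsum Z Z
        _ = ((‖eMat Z‖ : ℂ)) ^ 2 := trace_eMat_sq Z
    exact_mod_cast h2
  -- N^2 as a sum
  have hNsq : ((N : ℝ) : ℂ) ^ 2 = ∑ a ∈ s, lam a * ((S a * W)ᴴ * (S a * R)).trace := by
    rw [hN, ← trace_eMat_sq]
    have : Wᴴ * W = Wᴴ * (∑ a ∈ s, lam a • (G a * R)) := by rw [← hW]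
    rw [this, Matrix.mul_sum, Matrix.trace_sum]
    apply Finset.sum_congr rfl
    intro a _
    rw [Matrix.mul_smul, Matrix.trace_smul, smul_eq_mul, sand a W R]
  -- bound
  have hbound : N ^ 2 ≤ ∑ a ∈ s, ‖eMat (S a * W)‖ * ‖eMat (S a * R)‖ := by
    have : (N:ℝ)^2 = Complex.re (((N : ℝ) : ℂ) ^ 2) := by norm_cast
    rw [this, hNsq]
    calc Complex.re (∑ a ∈ s, lam a * ((S a * W)ᴴ * (S a * R)).trace)
        ≤ ‖∑ a ∈ s, lam a * ((S a * W)ᴴ * (S a * R)).trace‖ := Complex.re_le_norm _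
      _ ≤ ∑ a ∈ s, ‖lam a * ((S a * W)ᴴ * (S a * R)).trace‖ := norm_sum_le _ _
      _ ≤ ∑ a ∈ s, ‖eMat (S a * W)‖ * ‖eMat (S a * R)‖ := by
          apply Finset.sum_le_sum
          intro a _
          rw [norm_mul]
          calc ‖lam a‖ * ‖((S a * W)ᴴ * (S a * R)).trace‖
              ≤ 1 * (‖eMat (S a * W)‖ * ‖eMat (S a * R)‖) := by
                apply mul_le_mul (hlam a) (abs_trace_le _ _) (norm_nonneg _) zero_le_one
            _ = _ := one_mul _
  -- Cauchy–Schwarz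
  have hCS : (∑ a ∈ s, ‖eMat (S a * W)‖ * ‖eMat (S a * R)‖) ^ 2
      ≤ (∑ a ∈ s, ‖eMat (S a * W)‖ ^ 2) * (∑ a ∈ s, ‖eMat (S a * R)‖ ^ 2) :=
    Finset.sum_mul_sq_le_sq_mul_sq s _ _
  have hsub1 : ∑ a ∈ s, ‖eMat (S a * W)‖ ^ 2 ≤ N ^ 2 := by
    rw [hN, ← sumnorm W]
    exact Finset.sum_le_sum_of_subset_of_nonneg (Finset.subset_univ s)
      (fun a _ _ => sq_nonneg _)
  have hsub2 : ∑ a ∈ s, ‖eMat (S a * R)‖ ^ 2 ≤ 1 := by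
    have : ‖eMat R‖ ^ 2 = 1 := by
      have h1 := trace_eMat_sq R
      have h2 : (Rᴴ * R).trace = 1 := by rw [hRH]; exact hRtr
      have h3 : ((‖eMat R‖ : ℝ) : ℂ) ^ 2 = 1 := by rw [← h1]; exact h2
      exact_mod_cast h3
    rw [← this, ← sumnorm R]
    exact Finset.sum_le_sum_of_subset_of_nonneg (Finset.subset_univ s)
      (fun a _ _ => sq_nonneg _)
  have hsumnn : (0:ℝ) ≤ ∑ a ∈ s, ‖eMat (S a * W)‖ * ‖eMat (S a * R)‖ :=
    Finset.sum_nonneg (fun a _ => mul_nonneg (norm_nonneg _) (norm_nonneg _))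
  have hNnn : (0:ℝ) ≤ N := norm_nonneg _
  -- conclude
  have hS1 : (∑ a ∈ s, ‖eMat (S a * W)‖ * ‖eMat (S a * R)‖) ^ 2 ≤ N ^ 2 := by
    calc (∑ a ∈ s, ‖eMat (S a * W)‖ * ‖eMat (S a * R)‖) ^ 2
        ≤ (∑ a ∈ s, ‖eMat (S a * W)‖ ^ 2) * (∑ a ∈ s, ‖eMat (S a * R)‖ ^ 2) := hCS
      _ ≤ N ^ 2 * 1 := by
          apply mul_le_mul hsub1 hsub2
            (Finset.sum_nonneg (fun a _ => sq_nonneg _)) (sq_nonneg _)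
      _ = N ^ 2 := mul_one _
  have hS2 : (∑ a ∈ s, ‖eMat (S a * W)‖ * ‖eMat (S a * R)‖) ≤ N := by nlinarith
  have hNN : N ^ 2 ≤ N := le_trans hbound hS2
  nlinarith

end EUR

/-- **Entropic uncertainty relation for POVMs.** For any two POVMs
`A = {A a}` and `B = {B b}` on a finite-dimensional Hilbert space, with positive
semidefinite square roots `SA a` and `SB b`, and any density operator `ρ`,
`H(A|ρ) + H(B|ρ) ≥ -2 log max_{a,b} ‖A_a^{1/2} B_b^{1/2}‖`. -/
theorem entropic_uncertainty_relation
    {n ι κ : Type*} [Fintype n] [DecidableEq n]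
    [Fintype ι] [Fintype κ] [Nonempty ι] [Nonempty κ]
    (ρ : Matrix n n ℂ) (hρ : ρ.PosSemidef) (hρtr : ρ.trace = 1)
    (A : ι → Matrix n n ℂ) (B : κ → Matrix n n ℂ)
    (hA : ∀ a, (A a).PosSemidef) (hB : ∀ b, (B b).PosSemidef)
    (hAsum : ∑ a, A a = 1) (hBsum : ∑ b, B b = 1)
    (SA : ι → Matrix n n ℂ) (SB : κ → Matrix n n ℂ)
    (hSA : ∀ a, (SA a).PosSemidef ∧ SA a * SA a = A a)
    (hSB : ∀ b, (SB b).PosSemidef ∧ SB b * SB b = B b) :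
    povmEntropy ρ A + povmEntropy ρ B ≥
      -2 * Real.log (⨆ a, ⨆ b, opNorm (SA a * SB b)) := by
  classical
  obtain ⟨R, hRpsd, hRR⟩ : ∃ R : Matrix n n ℂ, R.PosSemidef ∧ R * R = ρ := by
    open scoped MatrixOrder in
    exact ⟨CFC.sqrt ρ, Matrix.nonneg_iff_posSemidef.mp (CFC.sqrt_nonneg ρ),
      CFC.sqrt_mul_sqrt_self ρ (Matrix.nonneg_iff_posSemidef.mpr hρ)⟩
  have hRH : Rᴴ = R := hRpsd.1
  have hRtr : (R * R).trace = 1 := by rw [hRR]; exact hρtr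
  have hSAH : ∀ a, (SA a)ᴴ = SA a := fun a => (hSA a).1.1
  have hSAsq : ∀ a, SA a * SA a = A a := fun a => (hSA a).2
  have hSBH : ∀ b, (SB b)ᴴ = SB b := fun b => (hSB b).1.1
  have hSBsq : ∀ b, SB b * SB b = B b := fun b => (hSB b).2
  set p : ι → ℝ := fun a => (ρ * A a).trace.re with hpdef
  set q : κ → ℝ := fun b => (ρ * B b).trace.re with hqdef
  set sa : ι → ℝ := fun a => ‖EUR.eMat (SA a * R)‖ with hsadef
  set sb : κ → ℝ := fun b => ‖EUR.eMat (SB b * R)‖ with hsbdef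
  -- the basic trace identities
  have keyA : ∀ a, (ρ * A a).trace = ((SA a * R)ᴴ * (SA a * R)).trace := by
    intro a
    calc (ρ * A a).trace
        = ((A a) * (R * R)).trace := by rw [hRR, Matrix.trace_mul_comm]
      _ = ((SA a * (SA a * R)) * R).trace := by
          rw [← hSAsq a]; congr 1; simp only [Matrix.mul_assoc]
      _ = (R * (SA a * (SA a * R))).trace := (Matrix.trace_mul_comm _ _)
      _ = ((SA a * R)ᴴ * (SA a * R)).trace := by
          rw [Matrix.conjTranspose_mul, hSAH, hRH, Matrix.mul_assoc]
  have keyB : ∀ b, (ρ * B b).trace = ((SB b * R)ᴴ * (SB b * R)).trace := by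
    intro b
    calc (ρ * B b).trace
        = ((B b) * (R * R)).trace := by rw [hRR, Matrix.trace_mul_comm]
      _ = ((SB b * (SB b * R)) * R).trace := by
          rw [← hSBsq b]; congr 1; simp only [Matrix.mul_assoc]
      _ = (R * (SB b * (SB b * R))).trace := (Matrix.trace_mul_comm _ _)
      _ = ((SB b * R)ᴴ * (SB b * R)).trace := by
          rw [Matrix.conjTranspose_mul, hSBH, hRH, Matrix.mul_assoc]
  have traceA_real : ∀ a, (ρ * A a).trace = ((p a : ℝ) : ℂ) := by
    intro a
    rw [keyA a, EUR.trace_eMat_sq, hpdef]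
    simp only [keyA a, EUR.trace_eMat_sq]
    norm_cast
  have traceB_real : ∀ b, (ρ * B b).trace = ((q b : ℝ) : ℂ) := by
    intro b
    rw [keyB b, EUR.trace_eMat_sq, hqdef]
    simp only [keyB b, EUR.trace_eMat_sq]
    norm_cast
  have pa_sq : ∀ a, p a = sa a ^ 2 := by
    intro a
    have h1 := keyA a
    rw [EUR.trace_eMat_sq, traceA_real a] at h1
    exact_mod_cast h1
  have qb_sq : ∀ b, q b = sb b ^ 2 := by
    intro b
    have h1 := keyB b
    rw [EUR.trace_eMat_sq, traceB_real b] at h1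
    exact_mod_cast h1
  have hp_nonneg : ∀ a, 0 ≤ p a := fun a => (pa_sq a) ▸ sq_nonneg _
  have hq_nonneg : ∀ b, 0 ≤ q b := fun b => (qb_sq b) ▸ sq_nonneg _
  have psum : ∑ a, p a = 1 := by
    have h1 : ∑ a, (ρ * A a).trace = 1 := by
      rw [← Matrix.trace_sum, ← Matrix.mul_sum, hAsum, mul_one]; exact hρtr
    have h2 : ((∑ a, p a : ℝ) : ℂ) = 1 := by
      push_cast
      rw [← h1]
      exact Finset.sum_congr rfl (fun a _ => (traceA_real a).symm)
    exact_mod_cast h2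
  have qsum : ∑ b, q b = 1 := by
    have h1 : ∑ b, (ρ * B b).trace = 1 := by
      rw [← Matrix.trace_sum, ← Matrix.mul_sum, hBsum, mul_one]; exact hρtr
    have h2 : ((∑ b, q b : ℝ) : ℂ) = 1 := by
      push_cast
      rw [← h1]
      exact Finset.sum_congr rfl (fun b _ => (traceB_real b).symm)
    exact_mod_cast h2
  -- vanishing
  have hAzero : ∀ a, p a = 0 → A a * R = 0 ∧ R * A a = 0 := by
    intro a ha
    have hsa0 : sa a = 0 := by
      have h1 := pa_sq a
      rw [ha] at h1
      have := sq_eq_zero_iff.mp h1.symm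
      exact this
    have hSR : SA a * R = 0 := EUR.eMat_eq_zero hsa0
    have hAR : A a * R = 0 := by
      rw [← hSAsq a, Matrix.mul_assoc, hSR, Matrix.mul_zero]
    refine ⟨hAR, ?_⟩
    have := congrArg Matrix.conjTranspose hAR
    simpa [Matrix.conjTranspose_mul, hRH, (hA a).1.eq] using this
  have hBzero : ∀ b, q b = 0 → B b * R = 0 ∧ R * B b = 0 := by
    intro b hb
    have hsb0 : sb b = 0 := by
      have h1 := qb_sq b
      rw [hb] at h1
      exact sq_eq_zero_iff.mp h1.symm
    have hSR : SB b * R = 0 := EUR.eMat_eq_zero hsb0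
    have hBR : B b * R = 0 := by
      rw [← hSBsq b, Matrix.mul_assoc, hSR, Matrix.mul_zero]
    refine ⟨hBR, ?_⟩
    have := congrArg Matrix.conjTranspose hBR
    simpa [Matrix.conjTranspose_mul, hRH, (hB b).1.eq] using this
  set t : ι → κ → ℂ := fun a b => (R * (A a * (B b * R))).trace with htdef
  have tzeroA : ∀ a b, p a = 0 → t a b = 0 := by
    intro a b ha
    have hRA := (hAzero a ha).2
    rw [htdef]
    simp only []
    rw [show R * (A a * (B b * R)) = (R * A a) * (B b * R) by simp only [Matrix.mul_assoc]]
    rw [hRA, Matrix.zero_mul, Matrix.trace_zero]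
  have tzeroB : ∀ a b, q b = 0 → t a b = 0 := by
    intro a b hb
    have hBR := (hBzero b hb).1
    rw [htdef]
    simp only []
    rw [hBR, Matrix.mul_zero, Matrix.mul_zero, Matrix.trace_zero]
  set fsA : Finset ι := Finset.univ.filter (fun a => p a ≠ 0) with hfsA
  set fsB : Finset κ := Finset.univ.filter (fun b => q b ≠ 0) with hfsB
  have rowsum : ∀ a, ∑ b ∈ fsB, t a b = ((p a : ℝ) : ℂ) := by
    intro a
    have hext : ∑ b ∈ fsB, t a b = ∑ b, t a b := by
      apply Finset.sum_subset (Finset.subset_univ _)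
      intro b _ hb
      have hq0 : q b = 0 := by simpa [hfsB] using hb
      exact tzeroB a b hq0
    rw [hext]
    have h1 : ∑ b, t a b = (R * (A a * R)).trace := by
      rw [htdef]
      simp only []
      rw [← Matrix.trace_sum]
      congr 1
      rw [← Matrix.mul_sum]
      congr 1
      rw [← Matrix.mul_sum]
      congr 1
      rw [← Matrix.sum_mul, hBsum, one_mul]
    rw [h1]
    have h2 : (R * (A a * R)).trace = (ρ * A a).trace := by
      rw [keyA a, Matrix.conjTranspose_mul, hSAH, hRH]
      congr 1
      rw [← hSAsq a]
      simp only [Matrix.mul_assoc]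
    rw [h2, traceA_real a]
  have colsum : ∀ b, ∑ a ∈ fsA, t a b = ((q b : ℝ) : ℂ) := by
    intro b
    have hext : ∑ a ∈ fsA, t a b = ∑ a, t a b := by
      apply Finset.sum_subset (Finset.subset_univ _)
      intro a _ ha
      have hp0 : p a = 0 := by simpa [hfsA] using ha
      exact tzeroA a b hp0
    rw [hext]
    have h1 : ∑ a, t a b = (R * (B b * R)).trace := by
      rw [htdef]
      simp only []
      rw [← Matrix.trace_sum]
      congr 1
      rw [← Matrix.mul_sum]
      congr 1
      rw [← Matrix.sum_mul, hAsum, one_mul]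
    rw [h1]
    have h2 : (R * (B b * R)).trace = (ρ * B b).trace := by
      rw [keyB b, Matrix.conjTranspose_mul, hSBH, hRH]
      congr 1
      rw [← hSBsq b]
      simp only [Matrix.mul_assoc]
    rw [h2, traceB_real b]
  -- the constant C
  have hn : Nonempty n := by
    by_contra h
    have : IsEmpty n := not_nonempty_iff.mp h
    rw [Matrix.trace] at hρtr
    simp at hρtr
  set C : ℝ := ⨆ a, ⨆ b, opNorm (SA a * SB b) with hCdef
  have hCge : ∀ a b, opNorm (SA a * SB b) ≤ C := by
    intro a b
    have h1 : opNorm (SA a * SB b) ≤ ⨆ b', opNorm (SA a * SB b') :=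
      le_ciSup (f := fun b' => opNorm (SA a * SB b')) (Set.Finite.bddAbove (Set.finite_range _)) b
    exact h1.trans (le_ciSup (f := fun a' => ⨆ b', opNorm (SA a' * SB b'))
      (Set.Finite.bddAbove (Set.finite_range _)) a)
  have hCpos : 0 < C := by
    have hex : ∃ a b, SA a * SB b ≠ 0 := by
      by_contra hno
      push_neg at hno
      have hAB : ∀ a b, A a * B b = 0 := by
        intro a b
        rw [← hSAsq a, ← hSBsq b]
        calc SA a * SA a * (SB b * SB b)
            = SA a * ((SA a * SB b) * SB b) := by simp only [Matrix.mul_assoc]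
          _ = 0 := by rw [hno a b, Matrix.zero_mul, Matrix.mul_zero]
      have hone : (1 : Matrix n n ℂ) = 0 := by
        calc (1 : Matrix n n ℂ) = (∑ a, A a) * (∑ b, B b) := by rw [hAsum, hBsum, one_mul]
          _ = ∑ a, ∑ b, A a * B b := by
              rw [Matrix.sum_mul]
              exact Finset.sum_congr rfl (fun a _ => Matrix.mul_sum _ _ _)
          _ = 0 := by simp [hAB]
      obtain ⟨i⟩ := hn
      have := congrFun (congrFun hone i) i
      simp [Matrix.one_apply_eq] at this
    obtain ⟨a, b, hab⟩ := hex
    have hinj : Function.Injective (Matrix.toEuclideanCLM (n := n) (𝕜 := ℂ)) :=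
      (Matrix.toEuclideanCLM (n := n) (𝕜 := ℂ)).injective
    have h1 : 0 < opNorm (SA a * SB b) := by
      rw [opNorm]
      apply norm_pos_iff.mpr
      intro hzero
      apply hab
      apply hinj
      rw [hzero, map_zero]
    exact lt_of_lt_of_le h1 (hCge a b)
  -- interpolation function
  set c : ι → κ → ℝ := fun a b => (Real.log (p a) + Real.log (q b)) / 2 with hcdef
  set F : ℂ → ℂ := fun z => ∑ a ∈ fsA, ∑ b ∈ fsB,
    Complex.exp (z * ((c a b : ℝ) : ℂ)) * t a b with hFdef
  have hFdiff : Differentiable ℂ F := by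
    apply Differentiable.fun_sum
    intro a _
    apply Differentiable.fun_sum
    intro b _
    exact ((differentiable_id.mul_const _).cexp).mul_const _
  have hF0 : F 0 = 1 := by
    rw [hFdef]
    simp only [zero_mul, Complex.exp_zero, one_mul]
    rw [Finset.sum_congr rfl (fun a _ => rowsum a)]
    have hext : ∑ a ∈ fsA, ((p a : ℝ) : ℂ) = ∑ a, ((p a : ℝ) : ℂ) := by
      apply Finset.sum_subset (Finset.subset_univ _)
      intro a _ ha
      have hp0 : p a = 0 := by simpa [hfsA] using ha
      rw [hp0]; simp
    rw [hext]
    have : ((∑ a, p a : ℝ) : ℂ) = 1 := by rw [psum]; simp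
    rw [← this]
    push_cast
    rfl
  have hEdge0 : ∀ z : ℂ, z.re = 0 → ‖F z‖ ≤ 1 := by
    intro z hz
    set lamA : ι → ℂ :=
      fun a => starRingEnd ℂ (Complex.exp (z * ((Real.log (p a)/2 : ℝ):ℂ))) with hlamAdef
    set lamB : κ → ℂ :=
      fun b => Complex.exp (z * ((Real.log (q b)/2 : ℝ):ℂ)) with hlamBdef
    have hmodA : ∀ a, ‖lamA a‖ ≤ 1 := by
      intro a
      rw [hlamAdef]
      simp only []
      rw [RCLike.norm_conj, Complex.norm_exp]
      have hre : (z * ((Real.log (p a)/2:ℝ):ℂ)).re = 0 := by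
        simp [Complex.mul_re, hz]
      rw [hre, Real.exp_zero]
    have hmodB : ∀ b, ‖lamB b‖ ≤ 1 := by
      intro b
      rw [hlamBdef]
      simp only []
      rw [Complex.norm_exp]
      have hre : (z * ((Real.log (q b)/2:ℝ):ℂ)).re = 0 := by
        simp [Complex.mul_re, hz]
      rw [hre, Real.exp_zero]
    set X : Matrix n n ℂ := ∑ a ∈ fsA, lamA a • (A a * R) with hXdef
    set Y : Matrix n n ℂ := ∑ b ∈ fsB, lamB b • (B b * R) with hYdef
    have hXH : Xᴴ = ∑ a ∈ fsA,
        (Complex.exp (z * ((Real.log (p a)/2:ℝ):ℂ))) • (R * A a) := by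
      rw [hXdef, Matrix.conjTranspose_sum]
      apply Finset.sum_congr rfl
      intro a _
      rw [Matrix.conjTranspose_smul, Matrix.conjTranspose_mul, hRH, (hA a).1.eq]
      congr 1
      rw [hlamAdef]
      simp [Complex.conj_conj]
    have hFz : F z = (Xᴴ * Y).trace := by
      rw [hXH, hYdef, EUR.trace_sum_smul_mul, hFdef]
      apply Finset.sum_congr rfl; intro a _
      apply Finset.sum_congr rfl; intro b _
      have hmm : (R * A a) * (B b * R) = R * (A a * (B b * R)) := by
        simp only [Matrix.mul_assoc]
      rw [hmm]
      rw [hlamBdef]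
      simp only []
      rw [← Complex.exp_add]
      congr 2
      rw [hcdef]
      push_cast
      ring
    have hXn : ‖EUR.eMat X‖ ≤ 1 := by
      rw [hXdef]
      exact EUR.norm_combo A SA R hSAH hSAsq hAsum hRH hRtr lamA hmodA fsA
    have hYn : ‖EUR.eMat Y‖ ≤ 1 := by
      rw [hYdef]
      exact EUR.norm_combo B SB R hSBH hSBsq hBsum hRH hRtr lamB hmodB fsB
    rw [hFz]
    calc ‖(Xᴴ * Y).trace‖ ≤ ‖EUR.eMat X‖ * ‖EUR.eMat Y‖ := EUR.abs_trace_le X Y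
      _ ≤ 1 * 1 := mul_le_mul hXn hYn (norm_nonneg _) zero_le_one
      _ = 1 := one_mul 1
  have hEdge1 : ∀ z : ℂ, z.re = 1 → ‖F z‖ ≤ C := by
    intro z hz
    have hterm : ∀ a ∈ fsA, ∀ b ∈ fsB,
        ‖Complex.exp (z * ((c a b:ℝ):ℂ)) * t a b‖ ≤ C * (p a * q b) := by
      intro a ha b hb
      have hpa : p a ≠ 0 := by simpa [hfsA] using ha
      have hqb : q b ≠ 0 := by simpa [hfsB] using hb
      have hpa' : 0 < p a := lt_of_le_of_ne (hp_nonneg a) (Ne.symm hpa)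
      have hqb' : 0 < q b := lt_of_le_of_ne (hq_nonneg b) (Ne.symm hqb)
      have hsa : 0 < sa a := by nlinarith [pa_sq a, norm_nonneg (EUR.eMat (SA a * R))]
      have hsb : 0 < sb b := by nlinarith [qb_sq b, norm_nonneg (EUR.eMat (SB b * R))]
      have hcoef : ‖Complex.exp (z * ((c a b:ℝ):ℂ))‖ = sa a * sb b := by
        rw [Complex.norm_exp]
        have hre : (z * ((c a b:ℝ):ℂ)).re = c a b := by
          simp [Complex.mul_re, hz]
        rw [hre, hcdef]
        simp only []
        rw [show (Real.log (p a) + Real.log (q b))/2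
            = Real.log (p a)/2 + Real.log (q b)/2 by ring, Real.exp_add]
        congr 1
        · rw [pa_sq a, Real.log_pow,
            show ((2:ℕ):ℝ) * Real.log (sa a) / 2 = Real.log (sa a) by push_cast; ring]
          exact Real.exp_log hsa
        · rw [qb_sq b, Real.log_pow,
            show ((2:ℕ):ℝ) * Real.log (sb b) / 2 = Real.log (sb b) by push_cast; ring]
          exact Real.exp_log hsb
      have htb : ‖t a b‖ ≤ sa a * (C * sb b) := by
        have hteq : t a b = ((SA a * R)ᴴ * ((SA a * SB b) * (SB b * R))).trace := by
          rw [htdef]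
          simp only []
          congr 1
          rw [Matrix.conjTranspose_mul, hSAH, hRH, ← hSAsq a, ← hSBsq b]
          simp only [Matrix.mul_assoc]
        rw [hteq]
        calc ‖((SA a * R)ᴴ * ((SA a * SB b) * (SB b * R))).trace‖
            ≤ ‖EUR.eMat (SA a * R)‖ * ‖EUR.eMat ((SA a * SB b) * (SB b * R))‖ :=
              EUR.abs_trace_le _ _
          _ ≤ sa a * (opNorm (SA a * SB b) * ‖EUR.eMat (SB b * R)‖) := by
              apply mul_le_mul_of_nonneg_left (EUR.norm_eMat_mul_le _ _) (norm_nonneg _)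
          _ ≤ sa a * (C * sb b) := by
              apply mul_le_mul_of_nonneg_left _ (le_of_lt hsa)
              exact mul_le_mul_of_nonneg_right (hCge a b) (norm_nonneg _)
      calc ‖Complex.exp (z * ((c a b:ℝ):ℂ)) * t a b‖
          = (sa a * sb b) * ‖t a b‖ := by rw [norm_mul, hcoef]
        _ ≤ (sa a * sb b) * (sa a * (C * sb b)) := by
            apply mul_le_mul_of_nonneg_left htb (by positivity)
        _ = C * (p a * q b) := by rw [pa_sq a, qb_sq b]; ring
    have hsplit : ‖F z‖ ≤ ∑ a ∈ fsA, ∑ b ∈ fsB, C * (p a * q b) := by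
      calc ‖F z‖
          = ‖∑ a ∈ fsA, ∑ b ∈ fsB, Complex.exp (z * ((c a b : ℝ):ℂ)) * t a b‖ := by
            rw [hFdef]
        _ ≤ ∑ a ∈ fsA, ‖∑ b ∈ fsB, Complex.exp (z * ((c a b : ℝ):ℂ)) * t a b‖ :=
            norm_sum_le _ _
        _ ≤ ∑ a ∈ fsA, ∑ b ∈ fsB, C * (p a * q b) := by
            apply Finset.sum_le_sum
            intro a ha
            calc ‖∑ b ∈ fsB, Complex.exp (z * ((c a b : ℝ):ℂ)) * t a b‖
                ≤ ∑ b ∈ fsB, ‖Complex.exp (z * ((c a b : ℝ):ℂ)) * t a b‖ := norm_sum_le _ _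
              _ ≤ ∑ b ∈ fsB, C * (p a * q b) :=
                  Finset.sum_le_sum (fun b hb => hterm a ha b hb)
    have hA1 : ∑ a ∈ fsA, p a ≤ 1 := by
      rw [← psum]
      exact Finset.sum_le_sum_of_subset_of_nonneg (Finset.subset_univ _)
        (fun a _ _ => hp_nonneg a)
    have hB1 : ∑ b ∈ fsB, q b ≤ 1 := by
      rw [← qsum]
      exact Finset.sum_le_sum_of_subset_of_nonneg (Finset.subset_univ _)
        (fun b _ _ => hq_nonneg b)
    have hfact : ∑ a ∈ fsA, ∑ b ∈ fsB, C * (p a * q b)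
        = C * ((∑ a ∈ fsA, p a) * (∑ b ∈ fsB, q b)) := by
      rw [Finset.sum_mul_sum]
      rw [Finset.mul_sum]
      apply Finset.sum_congr rfl; intro a _
      rw [Finset.mul_sum]
    calc ‖F z‖ ≤ ∑ a ∈ fsA, ∑ b ∈ fsB, C * (p a * q b) := hsplit
      _ = C * ((∑ a ∈ fsA, p a) * (∑ b ∈ fsB, q b)) := hfact
      _ ≤ C * 1 := by
          apply mul_le_mul_of_nonneg_left _ (le_of_lt hCpos)
          exact mul_le_one₀ hA1 (Finset.sum_nonneg (fun b _ => hq_nonneg b)) hB1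
      _ = C := mul_one C
  have hBdd : BddAbove ((norm ∘ F) ''
      (Complex.HadamardThreeLines.verticalClosedStrip 0 1)) := by
    refine ⟨∑ a ∈ fsA, ∑ b ∈ fsB, Real.exp |c a b| * ‖t a b‖, ?_⟩
    rintro y ⟨z, hzmem, rfl⟩
    simp only [Function.comp_apply]
    have hzre : z.re ∈ Set.Icc (0:ℝ) 1 := hzmem
    calc ‖F z‖
        = ‖∑ a ∈ fsA, ∑ b ∈ fsB, Complex.exp (z * ((c a b : ℝ):ℂ)) * t a b‖ := by
          rw [hFdef]
      _ ≤ ∑ a ∈ fsA, ‖∑ b ∈ fsB, Complex.exp (z * ((c a b : ℝ):ℂ)) * t a b‖ :=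
          norm_sum_le _ _
      _ ≤ ∑ a ∈ fsA, ∑ b ∈ fsB, Real.exp |c a b| * ‖t a b‖ := by
          apply Finset.sum_le_sum
          intro a _
          calc ‖∑ b ∈ fsB, Complex.exp (z * ((c a b : ℝ):ℂ)) * t a b‖
              ≤ ∑ b ∈ fsB, ‖Complex.exp (z * ((c a b : ℝ):ℂ)) * t a b‖ := norm_sum_le _ _
            _ ≤ ∑ b ∈ fsB, Real.exp |c a b| * ‖t a b‖ := by
                apply Finset.sum_le_sum
                intro b _
                rw [norm_mul]
                apply mul_le_mul_of_nonneg_right _ (norm_nonneg _)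
                rw [Complex.norm_exp]
                apply Real.exp_le_exp.mpr
                have hre : (z * ((c a b:ℝ):ℂ)).re = z.re * c a b := by
                  simp [Complex.mul_re]
                rw [hre]
                calc z.re * c a b ≤ |z.re * c a b| := le_abs_self _
                  _ = |z.re| * |c a b| := abs_mul _ _
                  _ ≤ 1 * |c a b| := by
                      apply mul_le_mul_of_nonneg_right _ (abs_nonneg _)
                      rw [abs_of_nonneg hzre.1]; exact hzre.2
                  _ = |c a b| := one_mul _
  have hthree : ∀ x : ℝ, x ∈ Set.Icc (0:ℝ) 1 → ‖F (x:ℂ)‖ ≤ Real.exp (x * Real.log C) := by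
    intro x hx
    have hz : (x:ℂ) ∈ Complex.HadamardThreeLines.verticalClosedStrip 0 1 := by
      simpa [Complex.HadamardThreeLines.verticalClosedStrip] using hx
    have h3 := Complex.HadamardThreeLines.norm_le_interp_of_mem_verticalClosedStrip' zero_lt_one hz
      (hFdiff.diffContOnCl) hBdd
      (fun w hw => hEdge0 w (by simpa using hw)) (fun w hw => hEdge1 w (by simpa using hw))
    calc ‖F (x:ℂ)‖ ≤ (1:ℝ) ^ (1 - (x:ℂ).re) * C ^ (x:ℂ).re := by simpa using h3
      _ = Real.exp (x * Real.log C) := by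
          rw [Complex.ofReal_re, Real.one_rpow, one_mul,
            Real.rpow_def_of_pos hCpos, mul_comm]
  -- the derivative at 0
  set DR : ℝ := -(povmEntropy ρ A + povmEntropy ρ B) / 2 with hDRdef
  have hHA : ∑ a ∈ fsA, Real.log (p a) * p a = -(povmEntropy ρ A) := by
    have h1 : ∑ a ∈ fsA, Real.log (p a) * p a = ∑ a, Real.log (p a) * p a := by
      apply Finset.sum_subset (Finset.subset_univ _)
      intro a _ ha
      have hp0 : p a = 0 := by simpa [hfsA] using ha
      rw [hp0]; simp
    rw [h1, povmEntropy, neg_neg]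
    exact Finset.sum_congr rfl (fun a _ => mul_comm _ _)
  have hHB : ∑ b ∈ fsB, Real.log (q b) * q b = -(povmEntropy ρ B) := by
    have h1 : ∑ b ∈ fsB, Real.log (q b) * q b = ∑ b, Real.log (q b) * q b := by
      apply Finset.sum_subset (Finset.subset_univ _)
      intro b _ hb
      have hq0 : q b = 0 := by simpa [hfsB] using hb
      rw [hq0]; simp
    rw [h1, povmEntropy, neg_neg]
    exact Finset.sum_congr rfl (fun b _ => mul_comm _ _)
  have hD : HasDerivAt F ((DR : ℝ) : ℂ) 0 := by
    have hder : HasDerivAt F (∑ a ∈ fsA, ∑ b ∈ fsB, ((c a b : ℝ) : ℂ) * t a b) 0 := by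
      rw [hFdef]
      apply HasDerivAt.fun_sum
      intro a _
      apply HasDerivAt.fun_sum
      intro b _
      have h1 : HasDerivAt (fun z : ℂ => z * ((c a b : ℝ):ℂ)) ((c a b:ℝ):ℂ) 0 := by
        simpa using (hasDerivAt_id (0:ℂ)).mul_const (((c a b : ℝ)):ℂ)
      have h2 := (h1.cexp).mul_const (t a b)
      simpa using h2
    have hval : (∑ a ∈ fsA, ∑ b ∈ fsB, ((c a b : ℝ) : ℂ) * t a b) = ((DR : ℝ) : ℂ) := by
      have hsplit : ∀ a ∈ fsA, ∀ b ∈ fsB, ((c a b : ℝ):ℂ) * t a b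
          = ((Real.log (p a)/2 : ℝ):ℂ) * t a b + ((Real.log (q b)/2 : ℝ):ℂ) * t a b := by
        intro a _ b _
        rw [← add_mul]
        congr 1
        rw [hcdef]
        push_cast
        ring
      calc ∑ a ∈ fsA, ∑ b ∈ fsB, ((c a b : ℝ) : ℂ) * t a b
          = ∑ a ∈ fsA, ∑ b ∈ fsB, (((Real.log (p a)/2 : ℝ):ℂ) * t a b
              + ((Real.log (q b)/2 : ℝ):ℂ) * t a b) := by
            apply Finset.sum_congr rfl; intro a ha
            apply Finset.sum_congr rfl; intro b hb
            exact hsplit a ha b hb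
        _ = (∑ a ∈ fsA, ∑ b ∈ fsB, ((Real.log (p a)/2 : ℝ):ℂ) * t a b)
              + ∑ a ∈ fsA, ∑ b ∈ fsB, ((Real.log (q b)/2 : ℝ):ℂ) * t a b := by
            rw [← Finset.sum_add_distrib]
            apply Finset.sum_congr rfl; intro a _
            rw [← Finset.sum_add_distrib]
        _ = (∑ a ∈ fsA, ((Real.log (p a)/2 : ℝ):ℂ) * ((p a : ℝ):ℂ))
              + ∑ b ∈ fsB, ((Real.log (q b)/2 : ℝ):ℂ) * ((q b : ℝ):ℂ) := by
            congr 1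
            · apply Finset.sum_congr rfl; intro a _
              rw [← Finset.mul_sum, rowsum a]
            · rw [Finset.sum_comm]
              apply Finset.sum_congr rfl; intro b _
              rw [← Finset.mul_sum, colsum b]
        _ = ((∑ a ∈ fsA, (Real.log (p a)/2) * p a
              + ∑ b ∈ fsB, (Real.log (q b)/2) * q b : ℝ) : ℂ) := by
            push_cast
            rfl
        _ = ((DR : ℝ) : ℂ) := by
            congr 1
            have e1 : ∑ a ∈ fsA, (Real.log (p a)/2) * p a
                = (∑ a ∈ fsA, Real.log (p a) * p a)/2 := by
              rw [Finset.sum_div]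
              apply Finset.sum_congr rfl; intro a _; ring
            have e2 : ∑ b ∈ fsB, (Real.log (q b)/2) * q b
                = (∑ b ∈ fsB, Real.log (q b) * q b)/2 := by
              rw [Finset.sum_div]
              apply Finset.sum_congr rfl; intro b _; ring
            rw [e1, e2, hHA, hHB, hDRdef]
            ring
    rw [← hval]
    exact hder
  -- end game
  have hh : HasDerivAt (fun x : ℝ => (F (x:ℂ)).re) DR 0 := by
    have h1 : HasDerivAt (fun x : ℝ => F (x:ℂ)) ((DR : ℝ) : ℂ) 0 := by
      apply HasDerivAt.comp_ofReal (z := 0)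
      simpa using hD
    have h2 := (Complex.reCLM.hasFDerivAt).comp_hasDerivAt 0 h1
    exact h2
  have hg : HasDerivAt (fun x : ℝ => Real.exp (x * Real.log C)) (Real.log C) 0 := by
    have := ((hasDerivAt_id (0:ℝ)).mul_const (Real.log C)).exp
    simpa using this
  have hmono : (𝓝[>] (0:ℝ)) ≤ 𝓝[≠] (0:ℝ) :=
    nhdsWithin_mono _ (fun x hx => by simpa using ne_of_gt hx)
  have tend_h : Filter.Tendsto (slope (fun x : ℝ => (F (x:ℂ)).re) 0) (𝓝[>] (0:ℝ)) (𝓝 DR) :=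
    (hasDerivAt_iff_tendsto_slope.mp hh).mono_left hmono
  have tend_g : Filter.Tendsto (slope (fun x : ℝ => Real.exp (x * Real.log C)) 0)
      (𝓝[>] (0:ℝ)) (𝓝 (Real.log C)) :=
    (hasDerivAt_iff_tendsto_slope.mp hg).mono_left hmono
  have hev : ∀ᶠ x in (𝓝[>] (0:ℝ)),
      slope (fun x : ℝ => (F (x:ℂ)).re) 0 x ≤
      slope (fun x : ℝ => Real.exp (x * Real.log C)) 0 x := by
    have hIoc : Set.Ioc (0:ℝ) 1 ∈ 𝓝[>] (0:ℝ) :=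
      Ioc_mem_nhdsGT_of_mem ⟨le_refl 0, zero_lt_one⟩
    filter_upwards [hIoc] with x hx
    have hx0 : (0:ℝ) < x := hx.1
    have hle : (F (x:ℂ)).re ≤ Real.exp (x * Real.log C) := by
      calc (F (x:ℂ)).re ≤ ‖F (x:ℂ)‖ := Complex.re_le_norm _
        _ ≤ Real.exp (x * Real.log C) := hthree x ⟨le_of_lt hx.1, hx.2⟩
    have h0eq : (F ((0:ℝ):ℂ)).re = 1 := by
      rw [show ((0:ℝ):ℂ) = 0 by norm_num, hF0]; simp
    have key : ((F (x:ℂ)).re - 1) / x ≤ (Real.exp (x * Real.log C) - 1) / x :=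
      (div_le_div_iff_of_pos_right hx0).mpr (by linarith)
    simpa [slope_def_field, hF0, Complex.one_re, sub_zero] using key
  have hfinal : DR ≤ Real.log C := le_of_tendsto_of_tendsto tend_h tend_g hev
  rw [hDRdef] at hfinal
  rw [ge_iff_le]
  linarith
end

section
/- Norm bound for error-syndrome projections: Let {|i⟩}_{i∈{0,1}^N} and {|ī⟩} be mutually unbiased product bases of (C²)^{⊗N}, let |ĩ⟩ denote the componentwise complex conjugate of |ī⟩ in the basis {|i⟩}, and define projections E_l = Σ_i |ĩ⟩⟨ĩ| ⊗ |\overline{i⊕l}⟩⟨\overline{i⊕l}| on H_A ⊗ H_B and P_j = |j⟩⟨j| ⊗ 1. Then ‖E_l P_j‖ ≤ 2^{-N/2} for all l, j ∈ {0,1}^N. -/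
open Matrix Kronecker

set_option maxHeartbeats 1000000
set_option synthInstance.maxHeartbeats 400000

section Aux

variable {n : Type*} [Fintype n] [DecidableEq n]

lemma opNorm_mul_self (M : Matrix n n ℂ) :
    opNorm (Mᴴ * M) = opNorm M * opNorm M := by
  unfold opNorm
  rw [_root_.map_mul, ← CStarRing.norm_star_mul_self]
  congr 1
  rw [← map_star]
  rfl

lemma opNorm_smul (c : ℂ) (M : Matrix n n ℂ) :
    opNorm (c • M) = ‖c‖ * opNorm M := by
  unfold opNorm
  rw [_root_.map_smul]
  exact norm_smul c (Matrix.toEuclideanCLM (𝕜 := ℂ) M)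

lemma opNorm_proj_le_one (M : Matrix n n ℂ) (h1 : Mᴴ = M) (h2 : M * M = M) :
    opNorm M ≤ 1 := by
  have key : opNorm M * opNorm M = opNorm M := by
    rw [← opNorm_mul_self, h1, h2]
  nlinarith [show (0:ℝ) ≤ opNorm M from norm_nonneg _]

lemma sum_swap4 {α : Type*} [Fintype α] (F : α → α → α → α → ℂ) :
    ∑ z : α, ∑ w : α, ∑ i : α, ∑ i' : α, F z w i i'
      = ∑ i : α, ∑ i' : α, ∑ z : α, ∑ w : α, F z w i i' :=
  calc ∑ z : α, ∑ w : α, ∑ i : α, ∑ i' : α, F z w i i'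
      = ∑ z : α, ∑ i : α, ∑ w : α, ∑ i' : α, F z w i i' :=
        Finset.sum_congr rfl fun _ _ => Finset.sum_comm
    _ = ∑ i : α, ∑ z : α, ∑ w : α, ∑ i' : α, F z w i i' := Finset.sum_comm
    _ = ∑ i : α, ∑ z : α, ∑ i' : α, ∑ w : α, F z w i i' :=
        Finset.sum_congr rfl fun _ _ => Finset.sum_congr rfl fun _ _ => Finset.sum_comm
    _ = ∑ i : α, ∑ i' : α, ∑ z : α, ∑ w : α, F z w i i' :=
        Finset.sum_congr rfl fun _ _ => Finset.sum_comm

lemma sum_factor {α : Type*} [Fintype α] (f g : α → ℂ) (r : ℂ) :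
    ∑ z : α, ∑ w : α, f z * (g w * r) = (∑ z : α, f z) * ((∑ w : α, g w) * r) := by
  simp only [Finset.sum_mul, Finset.mul_sum]
  exact Finset.sum_comm

end Aux

/-- **Norm bound for error-syndrome projections.** Let `{|i⟩}` be the
computational basis of `(ℂ²)^{⊗N}` and `{|ī⟩}` a mutually unbiased orthonormal basis
(components `eb i x = ⟨x|ī⟩` with `|eb i x|² = 2^{-N}`); let `|ĩ⟩` be the
componentwise complex conjugate of `|ī⟩`. With `E l = ∑ i |ĩ⟩⟨ĩ| ⊗ |\overline{i⊕l}⟩⟨\overline{i⊕l}|`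
and `P j = |j⟩⟨j| ⊗ 1`, one has `‖E l * P j‖ ≤ 2^{-N/2}` for all `l, j`. -/
theorem error_syndrome_norm_bound
    {N : ℕ}
    (eb : (Fin N → Bool) → (Fin N → Bool) → ℂ)
    (hortho : ∀ i j, ∑ x, starRingEnd ℂ (eb i x) * eb j x = if i = j then 1 else 0)
    (hmub : ∀ i x, ‖eb i x‖ ^ 2 = 1 / 2 ^ N)
    (E : (Fin N → Bool) → Matrix ((Fin N → Bool) × (Fin N → Bool))
          ((Fin N → Bool) × (Fin N → Bool)) ℂ)
    (hE : E = fun l => ∑ i : Fin N → Bool,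
      vecMulVec (fun x => starRingEnd ℂ (eb i x)) (star fun x => starRingEnd ℂ (eb i x))
        ⊗ₖ vecMulVec (eb fun k => xor (i k) (l k)) (star (eb fun k => xor (i k) (l k))))
    (P : (Fin N → Bool) → Matrix ((Fin N → Bool) × (Fin N → Bool))
          ((Fin N → Bool) × (Fin N → Bool)) ℂ)
    (hP : P = fun j => Matrix.single j j (1 : ℂ) ⊗ₖ (1 : Matrix _ _ ℂ))
    (l j : Fin N → Bool) :
    opNorm (E l * P j) ≤ Real.sqrt (1 / 2 ^ N) := by
  classical
  -- the xor-shift bijection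
  set b : (Fin N → Bool) → (Fin N → Bool) := fun i k => xor (i k) (l k) with hbdef
  have hbinv : ∀ i, b (b i) = i := by
    intro i; funext k; simp [hbdef, Bool.xor_assoc]
  have hbbij : Function.Bijective b :=
    Function.Involutive.bijective hbinv
  -- row orthonormality, conjugated form
  have hortho' : ∀ i i', ∑ x, eb i x * starRingEnd ℂ (eb i' x)
      = if i = i' then 1 else 0 := by
    intro i i'
    have := congrArg (starRingEnd ℂ) (hortho i i')
    simpa [map_sum, mul_comm, apply_ite (starRingEnd ℂ)] using this
  -- column orthonormality (from `U * Uᴴ = 1` to `Uᴴ * U = 1`)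
  have hcol : ∀ x y, ∑ i, eb i x * starRingEnd ℂ (eb i y)
      = if x = y then 1 else 0 := by
    have hU : (Matrix.of eb) * (Matrix.of eb)ᴴ = 1 := by
      ext i i'
      simpa [Matrix.mul_apply, Matrix.conjTranspose_apply, Matrix.one_apply] using
        hortho' i i'
    have hU' : (Matrix.of eb)ᴴ * (Matrix.of eb) = 1 := mul_eq_one_comm.mp hU
    intro x y
    have := congrFun (congrFun hU' y) x
    simpa [Matrix.mul_apply, Matrix.conjTranspose_apply, Matrix.one_apply, mul_comm,
      eq_comm] using this
  -- the modulus of each entry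
  have hsq : ∀ i x, starRingEnd ℂ (eb i x) * eb i x = ((1 / 2 ^ N : ℝ) : ℂ) := by
    intro i x
    have h1 : starRingEnd ℂ (eb i x) * eb i x = (Complex.normSq (eb i x) : ℂ) := by
      rw [mul_comm, Complex.mul_conj]
    rw [h1, ← Complex.sq_norm, hmub]
  -- entries of `E l`
  have hEapp : ∀ z w u y, E l (z, w) (u, y)
      = ∑ i, starRingEnd ℂ (eb i z) * eb i u * (eb (b i) w * starRingEnd ℂ (eb (b i) y)) := by
    intro z w u y
    rw [hE]
    simp only [Matrix.sum_apply, Matrix.kroneckerMap_apply, Matrix.vecMulVec_apply,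
      Pi.star_apply, RCLike.star_def, Complex.conj_conj]
    rfl
  -- entries of `E l * P j`: right multiplication by `P j` selects columns
  have hMapp : ∀ p x y, (E l * P j) p (x, y)
      = if x = j then E l p (j, y) else 0 := by
    intro p x y
    rw [hP, Matrix.mul_apply, Fintype.sum_prod_type]
    simp only [Matrix.kroneckerMap_apply, Matrix.one_apply, Matrix.single,
      Matrix.of_apply, mul_ite, mul_one, mul_zero, ite_mul, zero_mul, ite_and]
    by_cases hx : x = j
    · subst hx
      simp
    · simp [hx]
      intro h
      exact absurd h.symm hx
  -- the key identity : `(E l * P j)ᴴ * (E l * P j) = (1/2^N) • P j`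
  have key : (E l * P j)ᴴ * (E l * P j) = ((1 / 2 ^ N : ℝ) : ℂ) • P j := by
    ext ⟨x, y⟩ ⟨x', y'⟩
    rw [Matrix.mul_apply]
    simp only [Matrix.conjTranspose_apply, Matrix.smul_apply, smul_eq_mul]
    rw [Fintype.sum_prod_type]
    by_cases hx : x = j
    · by_cases hx' : x' = j
      · subst x; subst x'
        have hterm : ∀ z w,
            starRingEnd ℂ ((E l * P j) (z, w) (j, y)) * (E l * P j) (z, w) (j, y')
              = ∑ i, ∑ i', (eb i z * starRingEnd ℂ (eb i' z)) *
                  ((starRingEnd ℂ (eb (b i) w) * eb (b i') w) *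
                    (starRingEnd ℂ (eb i j) * eb i' j *
                      (eb (b i) y * starRingEnd ℂ (eb (b i') y')))) := by
          intro z w
          rw [hMapp, hMapp, if_pos rfl, if_pos rfl]
          rw [hEapp, hEapp, map_sum, Finset.sum_mul_sum]
          refine Finset.sum_congr rfl fun i _ => Finset.sum_congr rfl fun i' _ => ?_
          simp only [_root_.map_mul, Complex.conj_conj]
          ring
        calc (∑ z, ∑ w, starRingEnd ℂ ((E l * P j) (z, w) (j, y)) *
                (E l * P j) (z, w) (j, y'))
            = ∑ i, ∑ i', (∑ z, eb i z * starRingEnd ℂ (eb i' z)) *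
                ((∑ w, starRingEnd ℂ (eb (b i) w) * eb (b i') w) *
                  (starRingEnd ℂ (eb i j) * eb i' j *
                    (eb (b i) y * starRingEnd ℂ (eb (b i') y')))) := by
              simp only [hterm]
              rw [sum_swap4]
              exact Finset.sum_congr rfl fun i _ => Finset.sum_congr rfl fun i' _ =>
                sum_factor _ _ _
          _ = ∑ i, starRingEnd ℂ (eb i j) * eb i j *
                (eb (b i) y * starRingEnd ℂ (eb (b i) y')) := by
              refine Finset.sum_congr rfl fun i _ => ?_
              rw [Finset.sum_eq_single i]
              · rw [hortho' i i, hortho (b i) (b i)]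
                simp
              · intro i' _ hne
                rw [hortho' i i']
                simp [Ne.symm hne]
              · intro h; exact absurd (Finset.mem_univ i) h
          _ = ((1 / 2 ^ N : ℝ) : ℂ) * ∑ i, eb (b i) y * starRingEnd ℂ (eb (b i) y') := by
              rw [Finset.mul_sum]
              refine Finset.sum_congr rfl fun i _ => ?_
              rw [hsq]
          _ = ((1 / 2 ^ N : ℝ) : ℂ) * ∑ m, eb m y * starRingEnd ℂ (eb m y') := by
              congr 1
              exact Fintype.sum_bijective b hbbij _ _ fun i => rfl
          _ = ((1 / 2 ^ N : ℝ) : ℂ) * (if y = y' then 1 else 0) := by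
              rw [hcol]
          _ = ((1 / 2 ^ N : ℝ) : ℂ) * P j (j, y) (j, y') := by
              rw [hP]
              simp [Matrix.single, Matrix.one_apply]
      · have hx'' : ¬(j = x') := fun h => hx' h.symm
        simp only [hMapp]
        rw [hP]
        simp [hx', hx'', Matrix.single, Matrix.one_apply]
    · have hx'' : ¬(j = x) := fun h => hx h.symm
      simp only [hMapp]
      rw [hP]
      simp [hx, hx'', Matrix.single, Matrix.one_apply]
  -- `P j` is a self-adjoint projection
  have hPsa : (P j)ᴴ = P j := by
    rw [hP]
    ext ⟨x, y⟩ ⟨x', y'⟩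
    simp [Matrix.conjTranspose_apply, Matrix.single, Matrix.one_apply, and_comm,
      eq_comm, apply_ite (starRingEnd ℂ)]
  have hPidem : P j * P j = P j := by
    rw [hP]
    rw [← Matrix.mul_kronecker_mul, Matrix.single_mul_single_same, one_mul, mul_one]
  have hPnorm : opNorm (P j) ≤ 1 := opNorm_proj_le_one _ hPsa hPidem
  -- put everything together
  have hc : (0:ℝ) ≤ 1 / 2 ^ N := by positivity
  have hsqle : opNorm (E l * P j) * opNorm (E l * P j) ≤ 1 / 2 ^ N := by
    rw [← opNorm_mul_self, key, opNorm_smul]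
    have : ‖((1 / 2 ^ N : ℝ) : ℂ)‖ = 1 / 2 ^ N := by
      rw [Complex.norm_real, Real.norm_of_nonneg hc]
    rw [this]
    nlinarith [show (0:ℝ) ≤ opNorm (P j) from norm_nonneg _]
  have h0 : (0:ℝ) ≤ opNorm (E l * P j) := norm_nonneg _
  nlinarith [Real.sq_sqrt hc, Real.sqrt_nonneg (1 / 2 ^ N : ℝ)]
end
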